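/- arXiv:1908.00540 — 2 statements merged into one kernel-verified Lean document; each statement's English description precedes it below -/
import Mathlib

section
/- Let N ≥ 1 and k₁, k₂, a₁, a₂ > 0. Define m_i = −(√(N²k_i² + 8) − Nk_i)/(4k_i) for i = 1,2, and set z_i(x) = −k_i m_i (|x|² + 1), and let λ₁ = −a₁ + Nk₁ + (a₁/8)(√(N²k₁²+8)−Nk₁)(√(N²k₂²+8)−Nk₂) + (Na₁k₁/4)(√(N²k₂²+8)−Nk₂) and λ₂ defined symmetrically (swapping indices 1 and 2). Then for all x ∈ ℝ^N: −(k₁/2)Δz₁(x) + |∇z₁(x)|²/2 = |x|² − (λ₁+a₁)z₁(x) + a₁z₂(x), and −(k₂/2)Δz₂(x) + |∇z₂(x)|²/2 = |x|² − (λ₂+a₂)z₂(x) + a₂z₁(x). -/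
noncomputable def lap {N : ℕ} (f : EuclideanSpace ℝ (Fin N) → ℝ)
    (x : EuclideanSpace ℝ (Fin N)) : ℝ :=
  ∑ i : Fin N, iteratedFDeriv ℝ 2 f x ![EuclideanSpace.single i 1, EuclideanSpace.single i 1]

lemma quad_hasFDerivAt {N : ℕ} (c : ℝ) (x : EuclideanSpace ℝ (Fin N)) :
    HasFDerivAt (fun y : EuclideanSpace ℝ (Fin N) => c * (‖y‖ ^ 2 + 1))
      ((2 * c) • innerSL ℝ x) x := by
  have h1 : HasFDerivAt (fun y : EuclideanSpace ℝ (Fin N) => ‖y‖ ^ 2)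
      (2 • (innerSL ℝ x)) x := (hasStrictFDerivAt_norm_sq x).hasFDerivAt
  have h2 := ((h1.add_const 1).const_mul c)
  refine h2.congr_fderiv ?_
  ext v
  simp [mul_comm]
  ring

lemma quad_fderiv {N : ℕ} (c : ℝ) :
    fderiv ℝ (fun y : EuclideanSpace ℝ (Fin N) => c * (‖y‖ ^ 2 + 1))
      = fun x => (2 * c) • innerSL ℝ x := by
  funext x
  exact (quad_hasFDerivAt c x).fderiv

lemma quad_gradient {N : ℕ} (c : ℝ) (x : EuclideanSpace ℝ (Fin N)) :
    gradient (fun y : EuclideanSpace ℝ (Fin N) => c * (‖y‖ ^ 2 + 1)) x = (2 * c) • x := by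
  apply HasGradientAt.gradient
  rw [hasGradientAt_iff_hasFDerivAt]
  refine (quad_hasFDerivAt c x).congr_fderiv ?_
  ext v
  simp [InnerProductSpace.toDual_apply_apply, real_inner_smul_left]

lemma quad_lap {N : ℕ} (c : ℝ) (x : EuclideanSpace ℝ (Fin N)) :
    lap (fun y : EuclideanSpace ℝ (Fin N) => c * (‖y‖ ^ 2 + 1)) x = 2 * c * N := by
  unfold lap
  have hit : ∀ i : Fin N,
      iteratedFDeriv ℝ 2 (fun y : EuclideanSpace ℝ (Fin N) => c * (‖y‖ ^ 2 + 1)) x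
        ![EuclideanSpace.single i 1, EuclideanSpace.single i 1] = 2 * c := by
    intro i
    rw [iteratedFDeriv_two_apply, quad_fderiv]
    have h : fderiv ℝ (fun y : EuclideanSpace ℝ (Fin N) => (2 * c) • innerSL ℝ y) x
        = (2 * c) • (innerSL ℝ (E := EuclideanSpace ℝ (Fin N))) :=
      (((2 * c) • (innerSL ℝ (E := EuclideanSpace ℝ (Fin N)))).hasFDerivAt).fderiv
    simp only [Matrix.cons_val_zero, Matrix.cons_val_one, Matrix.head_cons, h]
    simp [EuclideanSpace.inner_single_left]
    rw [innerSL_apply_apply]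
    simp
  simp only [hit, Finset.sum_const, Finset.card_univ, Fintype.card_fin, nsmul_eq_mul]
  ring

theorem stmt_10 {N : ℕ} (hN : 1 ≤ N) (k₁ k₂ a₁ a₂ : ℝ)
    (hk₁ : 0 < k₁) (hk₂ : 0 < k₂) (ha₁ : 0 < a₁) (ha₂ : 0 < a₂)
    (m₁ m₂ : ℝ)
    (hm₁ : m₁ = -((Real.sqrt ((N : ℝ) ^ 2 * k₁ ^ 2 + 8) - N * k₁) / (4 * k₁)))
    (hm₂ : m₂ = -((Real.sqrt ((N : ℝ) ^ 2 * k₂ ^ 2 + 8) - N * k₂) / (4 * k₂)))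
    (z₁ z₂ : EuclideanSpace ℝ (Fin N) → ℝ)
    (hz₁ : ∀ x, z₁ x = -k₁ * m₁ * (‖x‖ ^ 2 + 1))
    (hz₂ : ∀ x, z₂ x = -k₂ * m₂ * (‖x‖ ^ 2 + 1))
    (l₁ l₂ : ℝ)
    (hl₁ : l₁ = -a₁ + N * k₁
        + a₁ / 8 * (Real.sqrt ((N : ℝ) ^ 2 * k₁ ^ 2 + 8) - N * k₁)
            * (Real.sqrt ((N : ℝ) ^ 2 * k₂ ^ 2 + 8) - N * k₂)
        + N * a₁ * k₁ / 4 * (Real.sqrt ((N : ℝ) ^ 2 * k₂ ^ 2 + 8) - N * k₂))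
    (hl₂ : l₂ = -a₂ + N * k₂
        + a₂ / 8 * (Real.sqrt ((N : ℝ) ^ 2 * k₁ ^ 2 + 8) - N * k₁)
            * (Real.sqrt ((N : ℝ) ^ 2 * k₂ ^ 2 + 8) - N * k₂)
        + N * a₂ * k₂ / 4 * (Real.sqrt ((N : ℝ) ^ 2 * k₁ ^ 2 + 8) - N * k₁)) :
    ∀ x : EuclideanSpace ℝ (Fin N),
      -(k₁ / 2) * lap z₁ x + ‖gradient z₁ x‖ ^ 2 / 2
        = ‖x‖ ^ 2 - (l₁ + a₁) * z₁ x + a₁ * z₂ x ∧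
      -(k₂ / 2) * lap z₂ x + ‖gradient z₂ x‖ ^ 2 / 2
        = ‖x‖ ^ 2 - (l₂ + a₂) * z₂ x + a₂ * z₁ x := by
  intro x
  set s₁ := Real.sqrt ((N : ℝ) ^ 2 * k₁ ^ 2 + 8) with hs₁def
  set s₂ := Real.sqrt ((N : ℝ) ^ 2 * k₂ ^ 2 + 8) with hs₂def
  have hs₁ : s₁ ^ 2 = (N : ℝ) ^ 2 * k₁ ^ 2 + 8 := Real.sq_sqrt (by positivity)
  have hs₂ : s₂ ^ 2 = (N : ℝ) ^ 2 * k₂ ^ 2 + 8 := Real.sq_sqrt (by positivity)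
  have hc₁ : -k₁ * m₁ = (s₁ - N * k₁) / 4 := by rw [hm₁]; field_simp
  have hc₂ : -k₂ * m₂ = (s₂ - N * k₂) / 4 := by rw [hm₂]; field_simp
  have e₁ : z₁ = fun y => (-k₁ * m₁) * (‖y‖ ^ 2 + 1) := funext hz₁
  have e₂ : z₂ = fun y => (-k₂ * m₂) * (‖y‖ ^ 2 + 1) := funext hz₂
  rw [e₁, e₂, quad_lap, quad_lap, quad_gradient, quad_gradient]
  have hnorm : ∀ c : ℝ, ‖(2 * c) • x‖ ^ 2 = (2 * c) ^ 2 * ‖x‖ ^ 2 := by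
    intro c
    rw [norm_smul]
    simp [mul_pow, sq_abs]
  rw [hnorm, hnorm, hc₁, hc₂, hl₁, hl₂]
  constructor
  · linear_combination
      (‖x‖ ^ 2 / 8 + (‖x‖ ^ 2 + 1) * a₁ * (s₂ - N * k₂) / 32) * hs₁
  · linear_combination
      (‖x‖ ^ 2 / 8 + (‖x‖ ^ 2 + 1) * a₂ * (s₁ - N * k₁) / 32) * hs₂
end

section
/- Let N ≥ 1, k₁, k₂ > 0, a₁, a₂ > 0, M₁, M₂ ≥ 0, λ₁, λ₂ > 0, and suppose B₁, B₂, D₁, D₂ < 0 satisfy: −4B₁² + 2M₁/k₁² + (2(λ₁+a₁)/k₁)B₁ − (2a₁k₂/k₁²)B₂ = 0, −2B₁N + 2M₁/k₁² + (2(λ₁+a₁)/k₁)D₁ − (2a₁k₂/k₁²)D₂ = 0, and the two symmetric equations with indices swapped. Let f₁, f₂ : ℝ^N → ℝ be continuous with 0 ≤ f_i(x) ≤ M_i(|x|²+1). Then the pair u(x) = e^{B₁|x|²+D₁}, v(x) = e^{B₂|x|²+D₂} satisfies, for all x ∈ ℝ^N: −Δu(x) + u(x)·(2/k₁²)(f₁(x)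 + (λ₁+a₁)k₁ ln u(x)) ≤ (2a₁k₂/k₁²)·u(x)·ln v(x), and the symmetric inequality for v. -/
noncomputable def innerL (N : ℕ) :
    EuclideanSpace ℝ (Fin N) →L[ℝ] EuclideanSpace ℝ (Fin N) →L[ℝ] ℝ :=
  (isBoundedBilinearMap_inner (𝕜 := ℝ) (E := EuclideanSpace ℝ (Fin N))).toContinuousLinearMap

@[simp] lemma innerL_apply {N : ℕ} (y w : EuclideanSpace ℝ (Fin N)) :
    innerL N y w = inner ℝ y w := rfl

lemma hasFDerivAt_expquad {N : ℕ} (B D : ℝ) (y : EuclideanSpace ℝ (Fin N)) :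
    HasFDerivAt (fun z : EuclideanSpace ℝ (Fin N) => Real.exp (B * ‖z‖ ^ 2 + D))
      ((2 * B * Real.exp (B * ‖y‖ ^ 2 + D)) • innerL N y) y := by
  have h0 : HasFDerivAt (fun z : EuclideanSpace ℝ (Fin N) => ‖z‖ ^ 2)
      (2 • (innerSL ℝ y)) y := (hasStrictFDerivAt_norm_sq y).hasFDerivAt
  have h1 : HasFDerivAt (fun z : EuclideanSpace ℝ (Fin N) => B * ‖z‖ ^ 2 + D)
      (B • (2 • (innerSL ℝ y))) y := (h0.const_mul B).add_const D
  have h2 := h1.exp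
  refine h2.congr_fderiv ?_
  ext w
  simp [mul_comm, mul_assoc, mul_left_comm]

lemma lap_expquad {N : ℕ} (B D : ℝ) (x : EuclideanSpace ℝ (Fin N)) :
    lap (fun z : EuclideanSpace ℝ (Fin N) => Real.exp (B * ‖z‖ ^ 2 + D)) x
      = Real.exp (B * ‖x‖ ^ 2 + D) * (4 * B ^ 2 * ‖x‖ ^ 2 + 2 * B * N) := by
  set g : EuclideanSpace ℝ (Fin N) → ℝ := fun z => Real.exp (B * ‖z‖ ^ 2 + D) with hg
  have hfd : fderiv ℝ g = fun y => (2 * B * g y) • innerL N y :=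
    funext fun y => (hasFDerivAt_expquad B D y).fderiv
  have h2 : HasFDerivAt (fun y : EuclideanSpace ℝ (Fin N) => (2 * B * g y) • innerL N y)
      ((2 * B * g x) • innerL N +
        (((2 * B : ℝ) • ((2 * B * g x) • innerL N x)) : EuclideanSpace ℝ (Fin N) →L[ℝ] ℝ).smulRight (innerL N x)) x := by
    have hc : HasFDerivAt (fun y : EuclideanSpace ℝ (Fin N) => 2 * B * g y)
        ((2 * B : ℝ) • ((2 * B * g x) • innerL N x)) x :=
      (hasFDerivAt_expquad B D x).const_mul (2 * B)
    exact hc.smul (innerL N).hasFDerivAt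
  have key : ∀ i : Fin N,
      iteratedFDeriv ℝ 2 g x ![EuclideanSpace.single i 1, EuclideanSpace.single i 1]
        = 2 * B * g x + 4 * B ^ 2 * g x * (x i) ^ 2 := by
    intro i
    rw [iteratedFDeriv_two_apply]
    have heq : fderiv ℝ (fderiv ℝ g) x = ((2 * B * g x) • innerL N +
        (((2 * B : ℝ) • ((2 * B * g x) • innerL N x)) : EuclideanSpace ℝ (Fin N) →L[ℝ] ℝ).smulRight (innerL N x)) := by
      rw [hfd]; exact h2.fderiv
    rw [heq]
    have hs : (inner ℝ (EuclideanSpace.single i (1:ℝ)) (EuclideanSpace.single i (1:ℝ)) : ℝ) = 1 := by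
      rw [EuclideanSpace.inner_single_right]; simp
    have hx : (inner ℝ x (EuclideanSpace.single i (1:ℝ)) : ℝ) = x i := by
      rw [EuclideanSpace.inner_single_right]; simp
    simp only [Matrix.cons_val_zero, Matrix.cons_val_one, Matrix.head_cons,
      ContinuousLinearMap.add_apply, ContinuousLinearMap.smul_apply,
      ContinuousLinearMap.smulRight_apply, smul_eq_mul, innerL_apply, hs, hx]
    ring
  have hnorm : ∑ i : Fin N, (x i) ^ 2 = ‖x‖ ^ 2 := by
    rw [← real_inner_self_eq_norm_sq, PiLp.inner_apply]
    simp [sq]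
  unfold lap
  rw [Finset.sum_congr rfl fun i _ => key i]
  rw [Finset.sum_add_distrib, Finset.sum_const, ← Finset.mul_sum, hnorm]
  simp
  ring

theorem stmt_15 {N : ℕ} (hN : 1 ≤ N) (k₁ k₂ a₁ a₂ M₁ M₂ l₁ l₂ B₁ B₂ D₁ D₂ : ℝ)
    (hk₁ : 0 < k₁) (hk₂ : 0 < k₂) (ha₁ : 0 < a₁) (ha₂ : 0 < a₂)
    (hM₁ : 0 ≤ M₁) (hM₂ : 0 ≤ M₂) (hl₁ : 0 < l₁) (hl₂ : 0 < l₂)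
    (hB₁ : B₁ < 0) (hB₂ : B₂ < 0) (hD₁ : D₁ < 0) (hD₂ : D₂ < 0)
    (heq1 : -4 * B₁ ^ 2 + 2 * M₁ / k₁ ^ 2 + 2 * (l₁ + a₁) / k₁ * B₁
        - 2 * a₁ * k₂ / k₁ ^ 2 * B₂ = 0)
    (heq2 : -2 * B₁ * N + 2 * M₁ / k₁ ^ 2 + 2 * (l₁ + a₁) / k₁ * D₁
        - 2 * a₁ * k₂ / k₁ ^ 2 * D₂ = 0)
    (heq3 : -4 * B₂ ^ 2 + 2 * M₂ / k₂ ^ 2 + 2 * (l₂ + a₂) / k₂ * B₂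
        - 2 * a₂ * k₁ / k₂ ^ 2 * B₁ = 0)
    (heq4 : -2 * B₂ * N + 2 * M₂ / k₂ ^ 2 + 2 * (l₂ + a₂) / k₂ * D₂
        - 2 * a₂ * k₁ / k₂ ^ 2 * D₁ = 0)
    (f₁ f₂ : EuclideanSpace ℝ (Fin N) → ℝ)
    (hf₁c : Continuous f₁) (hf₂c : Continuous f₂)
    (hf₁ : ∀ x, 0 ≤ f₁ x ∧ f₁ x ≤ M₁ * (‖x‖ ^ 2 + 1))
    (hf₂ : ∀ x, 0 ≤ f₂ x ∧ f₂ x ≤ M₂ * (‖x‖ ^ 2 + 1))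
    (u v : EuclideanSpace ℝ (Fin N) → ℝ)
    (hu : ∀ x, u x = Real.exp (B₁ * ‖x‖ ^ 2 + D₁))
    (hv : ∀ x, v x = Real.exp (B₂ * ‖x‖ ^ 2 + D₂)) :
    ∀ x : EuclideanSpace ℝ (Fin N),
      -(lap u x) + u x * (2 / k₁ ^ 2 * (f₁ x + (l₁ + a₁) * k₁ * Real.log (u x)))
        ≤ 2 * a₁ * k₂ / k₁ ^ 2 * u x * Real.log (v x) ∧
      -(lap v x) + v x * (2 / k₂ ^ 2 * (f₂ x + (l₂ + a₂) * k₂ * Real.log (v x)))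
        ≤ 2 * a₂ * k₁ / k₂ ^ 2 * v x * Real.log (u x) := by
  have hue : u = fun z => Real.exp (B₁ * ‖z‖ ^ 2 + D₁) := funext hu
  have hve : v = fun z => Real.exp (B₂ * ‖z‖ ^ 2 + D₂) := funext hv
  intro x
  have hr : (0:ℝ) ≤ ‖x‖ ^ 2 := sq_nonneg _
  have hE₁ : 0 < Real.exp (B₁ * ‖x‖ ^ 2 + D₁) := Real.exp_pos _
  have hE₂ : 0 < Real.exp (B₂ * ‖x‖ ^ 2 + D₂) := Real.exp_pos _
  have hlapu : lap u x = Real.exp (B₁ * ‖x‖ ^ 2 + D₁) * (4 * B₁ ^ 2 * ‖x‖ ^ 2 + 2 * B₁ * N) := by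
    rw [hue, lap_expquad]
  have hlapv : lap v x = Real.exp (B₂ * ‖x‖ ^ 2 + D₂) * (4 * B₂ ^ 2 * ‖x‖ ^ 2 + 2 * B₂ * N) := by
    rw [hve, lap_expquad]
  have hk1 : (0:ℝ) < k₁ ^ 2 := by positivity
  have hk2 : (0:ℝ) < k₂ ^ 2 := by positivity
  constructor
  · have hne : k₁ ≠ 0 := hk₁.ne'
    have e1 : -4 * B₁ ^ 2 * k₁ ^ 2 + 2 * M₁ + 2 * (l₁ + a₁) * k₁ * B₁ - 2 * a₁ * k₂ * B₂ = 0 := by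
      have key : -4 * B₁ ^ 2 * k₁ ^ 2 + 2 * M₁ + 2 * (l₁ + a₁) * k₁ * B₁ - 2 * a₁ * k₂ * B₂
          = k₁ ^ 2 * (-4 * B₁ ^ 2 + 2 * M₁ / k₁ ^ 2 + 2 * (l₁ + a₁) / k₁ * B₁
            - 2 * a₁ * k₂ / k₁ ^ 2 * B₂) := by field_simp
      rw [key, heq1, mul_zero]
    have e2 : -2 * B₁ * N * k₁ ^ 2 + 2 * M₁ + 2 * (l₁ + a₁) * k₁ * D₁ - 2 * a₁ * k₂ * D₂ = 0 := by
      have key : -2 * B₁ * N * k₁ ^ 2 + 2 * M₁ + 2 * (l₁ + a₁) * k₁ * D₁ - 2 * a₁ * k₂ * D₂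
          = k₁ ^ 2 * (-2 * B₁ * N + 2 * M₁ / k₁ ^ 2 + 2 * (l₁ + a₁) / k₁ * D₁
            - 2 * a₁ * k₂ / k₁ ^ 2 * D₂) := by field_simp
      rw [key, heq2, mul_zero]
    have hscal : -(4 * B₁ ^ 2 * ‖x‖ ^ 2 + 2 * B₁ * N)
        + 2 / k₁ ^ 2 * (f₁ x + (l₁ + a₁) * k₁ * (B₁ * ‖x‖ ^ 2 + D₁))
        ≤ 2 * a₁ * k₂ / k₁ ^ 2 * (B₂ * ‖x‖ ^ 2 + D₂) := by
      rw [← mul_le_mul_iff_right₀ hk1]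
      have eL : k₁ ^ 2 * (-(4 * B₁ ^ 2 * ‖x‖ ^ 2 + 2 * B₁ * N)
          + 2 / k₁ ^ 2 * (f₁ x + (l₁ + a₁) * k₁ * (B₁ * ‖x‖ ^ 2 + D₁)))
          = -(4 * B₁ ^ 2 * ‖x‖ ^ 2 + 2 * B₁ * N) * k₁ ^ 2
            + 2 * (f₁ x + (l₁ + a₁) * k₁ * (B₁ * ‖x‖ ^ 2 + D₁)) := by field_simp
      have eR : k₁ ^ 2 * (2 * a₁ * k₂ / k₁ ^ 2 * (B₂ * ‖x‖ ^ 2 + D₂))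
          = 2 * a₁ * k₂ * (B₂ * ‖x‖ ^ 2 + D₂) := by field_simp
      rw [eL, eR]
      linarith [mul_eq_zero_of_left e1 (‖x‖ ^ 2), e2, (hf₁ x).2]
    rw [hlapu, hu x, hv x, Real.log_exp, Real.log_exp]
    linarith [mul_le_mul_of_nonneg_left hscal hE₁.le]
  · have hne : k₂ ≠ 0 := hk₂.ne'
    have e3 : -4 * B₂ ^ 2 * k₂ ^ 2 + 2 * M₂ + 2 * (l₂ + a₂) * k₂ * B₂ - 2 * a₂ * k₁ * B₁ = 0 := by
      have key : -4 * B₂ ^ 2 * k₂ ^ 2 + 2 * M₂ + 2 * (l₂ + a₂) * k₂ * B₂ - 2 * a₂ * k₁ * B₁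
          = k₂ ^ 2 * (-4 * B₂ ^ 2 + 2 * M₂ / k₂ ^ 2 + 2 * (l₂ + a₂) / k₂ * B₂
            - 2 * a₂ * k₁ / k₂ ^ 2 * B₁) := by field_simp
      rw [key, heq3, mul_zero]
    have e4 : -2 * B₂ * N * k₂ ^ 2 + 2 * M₂ + 2 * (l₂ + a₂) * k₂ * D₂ - 2 * a₂ * k₁ * D₁ = 0 := by
      have key : -2 * B₂ * N * k₂ ^ 2 + 2 * M₂ + 2 * (l₂ + a₂) * k₂ * D₂ - 2 * a₂ * k₁ * D₁
          = k₂ ^ 2 * (-2 * B₂ * N + 2 * M₂ / k₂ ^ 2 + 2 * (l₂ + a₂) / k₂ * D₂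
            - 2 * a₂ * k₁ / k₂ ^ 2 * D₁) := by field_simp
      rw [key, heq4, mul_zero]
    have hscal : -(4 * B₂ ^ 2 * ‖x‖ ^ 2 + 2 * B₂ * N)
        + 2 / k₂ ^ 2 * (f₂ x + (l₂ + a₂) * k₂ * (B₂ * ‖x‖ ^ 2 + D₂))
        ≤ 2 * a₂ * k₁ / k₂ ^ 2 * (B₁ * ‖x‖ ^ 2 + D₁) := by
      rw [← mul_le_mul_iff_right₀ hk2]
      have eL : k₂ ^ 2 * (-(4 * B₂ ^ 2 * ‖x‖ ^ 2 + 2 * B₂ * N)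
          + 2 / k₂ ^ 2 * (f₂ x + (l₂ + a₂) * k₂ * (B₂ * ‖x‖ ^ 2 + D₂)))
          = -(4 * B₂ ^ 2 * ‖x‖ ^ 2 + 2 * B₂ * N) * k₂ ^ 2
            + 2 * (f₂ x + (l₂ + a₂) * k₂ * (B₂ * ‖x‖ ^ 2 + D₂)) := by field_simp
      have eR : k₂ ^ 2 * (2 * a₂ * k₁ / k₂ ^ 2 * (B₁ * ‖x‖ ^ 2 + D₁))
          = 2 * a₂ * k₁ * (B₁ * ‖x‖ ^ 2 + D₁) := by field_simp
      rw [eL, eR]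
      linarith [mul_eq_zero_of_left e3 (‖x‖ ^ 2), e4, (hf₂ x).2]
    rw [hlapv, hu x, hv x, Real.log_exp, Real.log_exp]
    linarith [mul_le_mul_of_nonneg_left hscal hE₂.le]
end
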